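/- Let X be a finite totally ordered alphabet, τ : X → ℤ_{>0}, and σ₁,…,σ_s : X → ℤ_{≥0}. Define g : X* → ℤ_{≥0}^{1+2s} × X*_lex by g = (τ*, σ_s*, σ_s^#, σ_{s-1}*, σ_{s-1}^#, …, σ₁*, σ₁^#, id), and order X* by w ≤_g w' iff g(w) ≤ g(w') lexicographically (with X* in the last coordinate ordered lexicographically). Then (X*, ≤_g) is an ordered monoid. -/

import Mathlib

/-- `σ*(w) = Σᵢ σ(aᵢ)`. -/
def sigmaStar {X : Type*} (σ : X → ℕ) (w : List X) : ℕ :=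
  (w.map σ).sum

/-- `σ^#(w) = Σᵢ σ(aᵢ)·(τ(a₁)+⋯+τ(aᵢ))`. -/
def sigmaSharp {X : Type*} [Inhabited X] (τ σ : X → ℕ) (w : List X) : ℕ :=
  ∑ i ∈ Finset.range w.length, σ (w.getD i default) * sigmaStar τ (w.take (i + 1))

/-- Lexicographic comparison of words via a list of numerical keys, with a final
lexicographic tie-break on the words themselves. -/
def keysLe {X : Type*} [LinearOrder X] :
    List (List X → ℕ) → List X → List X → Prop
  | [], w, w' => List.Lex (· < ·) w w' ∨ w = w'
  | k :: ks, w, w' => k w < k w' ∨ (k w = k w' ∧ keysLe ks w w')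

/-- The order `≤_g` of the auxiliary lexicographic construction: compare
`(τ*, σ_s*, σ_s^#, σ_{s-1}*, σ_{s-1}^#, …, σ₁*, σ₁^#, id)` lexicographically. -/
def gLe {X : Type*} [Inhabited X] [LinearOrder X] (τ : X → ℕ) {s : ℕ}
    (σ : Fin s → X → ℕ) : List X → List X → Prop :=
  keysLe (sigmaStar τ ::
    (List.finRange s).reverse.flatMap
      (fun j => [sigmaStar (σ j), sigmaSharp τ (σ j)]))

lemma sigmaStar_nil {X : Type*} (σ : X → ℕ) : sigmaStar σ ([] : List X) = 0 := rfl

lemma sigmaStar_cons {X : Type*} (σ : X → ℕ) (a : X) (w : List X) :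
    sigmaStar σ (a :: w) = σ a + sigmaStar σ w := by simp [sigmaStar]

lemma sigmaStar_append {X : Type*} (σ : X → ℕ) (w u : List X) :
    sigmaStar σ (w ++ u) = sigmaStar σ w + sigmaStar σ u := by simp [sigmaStar]

lemma sigmaStar_eq_sum {X : Type*} [Inhabited X] (σ : X → ℕ) (w : List X) :
    ∑ i ∈ Finset.range w.length, σ (w.getD i default) = sigmaStar σ w := by
  induction w using List.reverseRecOn with
  | nil => simp [sigmaStar]
  | append_singleton v b ih =>
      rw [List.length_append, List.length_singleton, Finset.sum_range_succ, sigmaStar_append]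
      rw [Finset.sum_congr rfl fun i hi => by
        rw [List.getD_append _ _ _ _ (Finset.mem_range.mp hi)], ih]
      simp [List.getD_append_right, List.getD, sigmaStar]

lemma sigmaSharp_nil {X : Type*} [Inhabited X] (τ σ : X → ℕ) :
    sigmaSharp τ σ ([] : List X) = 0 := by simp [sigmaSharp]

lemma sigmaSharp_cons {X : Type*} [Inhabited X] (τ σ : X → ℕ) (a : X) (w : List X) :
    sigmaSharp τ σ (a :: w) = σ a * τ a + sigmaSharp τ σ w + sigmaStar σ w * τ a := by
  rw [sigmaSharp, List.length_cons, Finset.sum_range_succ']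
  simp only [List.getD_cons_succ, List.getD_cons_zero, List.take_succ_cons, sigmaStar_cons]
  have h : ∀ i, σ (w.getD i default) * (τ a + sigmaStar τ (w.take (i+1)))
      = σ (w.getD i default) * sigmaStar τ (w.take (i+1)) + σ (w.getD i default) * τ a := by
    intro i; ring
  rw [Finset.sum_congr rfl fun i _ => h i, Finset.sum_add_distrib, ← Finset.sum_mul,
    sigmaStar_eq_sum, sigmaSharp]
  simp only [List.take_zero, sigmaStar_nil]
  ring

lemma sigmaSharp_append {X : Type*} [Inhabited X] (τ σ : X → ℕ) (w u : List X) :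
    sigmaSharp τ σ (w ++ u)
      = sigmaSharp τ σ w + sigmaSharp τ σ u + sigmaStar σ u * sigmaStar τ w := by
  induction w with
  | nil => simp [sigmaSharp_nil, sigmaStar_nil]
  | cons a w ih =>
      rw [List.cons_append, sigmaSharp_cons, sigmaSharp_cons, ih,
        sigmaStar_append, sigmaStar_cons]
      ring

lemma lex_append_left {X : Type*} [LinearOrder X] (w : List X) {u u' : List X}
    (h : List.Lex (· < ·) u u') : List.Lex (· < ·) (w ++ u) (w ++ u') := by
  induction w with
  | nil => exact h
  | cons a w ih => exact List.Lex.cons ih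

lemma lex_append_right {X : Type*} [LinearOrder X] (τ : X → ℕ) (hτ : ∀ a, 0 < τ a)
    {w w' : List X} (hlex : List.Lex (· < ·) w w') (u : List X) :
    sigmaStar τ w = sigmaStar τ w' → List.Lex (· < ·) (w ++ u) (w' ++ u) := by
  induction hlex with
  | @nil b l =>
      intro heq
      rw [sigmaStar_nil, sigmaStar_cons] at heq
      have := hτ b; omega
  | @cons a l₁ l₂ h ih =>
      intro heq
      rw [sigmaStar_cons, sigmaStar_cons] at heq
      exact List.Lex.cons (ih (by omega))
  | @rel a l₁ b l₂ hab =>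
      intro _
      exact List.Lex.rel hab


lemma keysLe_refl {X : Type*} [LinearOrder X] :
    ∀ (ks : List (List X → ℕ)) (w : List X), keysLe ks w w
  | [], w => Or.inr rfl
  | k :: ks, w => Or.inr ⟨rfl, keysLe_refl ks w⟩

lemma keysLe_total {X : Type*} [LinearOrder X] :
    ∀ (ks : List (List X → ℕ)) (w w' : List X), keysLe ks w w' ∨ keysLe ks w' w
  | [], w, w' => by
      rcases trichotomous_of (List.Lex (α := X) (· < ·)) w w' with h | h | h
      · exact Or.inl (Or.inl h)
      · exact Or.inl (Or.inr h)
      · exact Or.inr (Or.inl h)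
  | k :: ks, w, w' => by
      rcases lt_trichotomy (k w) (k w') with h | h | h
      · exact Or.inl (Or.inl h)
      · rcases keysLe_total ks w w' with h2 | h2
        · exact Or.inl (Or.inr ⟨h, h2⟩)
        · exact Or.inr (Or.inr ⟨h.symm, h2⟩)
      · exact Or.inr (Or.inl h)

lemma keysLe_antisymm {X : Type*} [LinearOrder X] :
    ∀ (ks : List (List X → ℕ)) (w w' : List X),
      keysLe ks w w' → keysLe ks w' w → w = w'
  | [], w, w', h1, h2 => by
      rcases h1 with h1 | h1
      · rcases h2 with h2 | h2
        · exact absurd h1 (asymm_of (List.Lex (α := X) (· < ·)) h2)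
        · exact h2.symm
      · exact h1
  | k :: ks, w, w', h1, h2 => by
      rcases h1 with h1 | ⟨he1, h1⟩ <;> rcases h2 with h2 | ⟨he2, h2⟩
      · omega
      · omega
      · omega
      · exact keysLe_antisymm ks w w' h1 h2

lemma keysLe_trans {X : Type*} [LinearOrder X] :
    ∀ (ks : List (List X → ℕ)) (w w' w'' : List X),
      keysLe ks w w' → keysLe ks w' w'' → keysLe ks w w''
  | [], w, w', w'', h1, h2 => by
      rcases h1 with h1 | rfl
      · rcases h2 with h2 | rfl
        · exact Or.inl (List.lt_trans h1 h2)
        · exact Or.inl h1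
      · exact h2
  | k :: ks, w, w', w'', h1, h2 => by
      rcases h1 with h1 | ⟨he1, h1⟩ <;> rcases h2 with h2 | ⟨he2, h2⟩
      · exact Or.inl (by omega)
      · exact Or.inl (by omega)
      · exact Or.inl (by omega)
      · exact Or.inr ⟨he1.trans he2, keysLe_trans ks w w' w'' h1 h2⟩

lemma keysLe_nil_left {X : Type*} [LinearOrder X] :
    ∀ (ks : List (List X → ℕ)), (∀ k ∈ ks, k [] = 0) → ∀ w, keysLe ks [] w
  | [], _, w => by
      cases w with
      | nil => exact Or.inr rfl
      | cons a w => exact Or.inl List.Lex.nil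
  | k :: ks, h, w => by
      rcases Nat.eq_zero_or_pos (k w) with h0 | h0
      · exact Or.inr ⟨by rw [h k (by simp), h0],
          keysLe_nil_left ks (fun k' hk' => h k' (by simp [hk'])) w⟩
      · exact Or.inl (by rw [h k (by simp)]; exact h0)

lemma pairKeys_right {X : Type*} [Inhabited X] [LinearOrder X] (τ : X → ℕ)
    (hτ : ∀ a, 0 < τ a) {ι : Type*} (σ : ι → X → ℕ) (u : List X) :
    ∀ (l : List ι) {w w' : List X}, sigmaStar τ w = sigmaStar τ w' →
      keysLe (l.flatMap fun j => [sigmaStar (σ j), sigmaSharp τ (σ j)]) w w' →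
      keysLe (l.flatMap fun j => [sigmaStar (σ j), sigmaSharp τ (σ j)]) (w ++ u) (w' ++ u)
  | [], w, w', hτeq, h => by
      simp only [List.flatMap_nil, keysLe] at h ⊢
      rcases h with h | rfl
      · exact Or.inl (lex_append_right τ hτ h u hτeq)
      · exact Or.inr rfl
  | j :: l, w, w', hτeq, h => by
      simp only [List.flatMap_cons, List.cons_append, List.nil_append, keysLe] at h ⊢
      rcases h with h | ⟨he, h | ⟨he2, h⟩⟩
      · exact Or.inl (by rw [sigmaStar_append, sigmaStar_append]; omega)
      · refine Or.inr ⟨by rw [sigmaStar_append, sigmaStar_append, he], Or.inl ?_⟩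
        rw [sigmaSharp_append, sigmaSharp_append, hτeq]
        omega
      · exact Or.inr ⟨by rw [sigmaStar_append, sigmaStar_append, he],
          Or.inr ⟨by rw [sigmaSharp_append, sigmaSharp_append, hτeq, he2],
            pairKeys_right τ hτ σ u l hτeq h⟩⟩

lemma pairKeys_left {X : Type*} [Inhabited X] [LinearOrder X] (τ : X → ℕ)
    {ι : Type*} (σ : ι → X → ℕ) (w : List X) :
    ∀ (l : List ι) {u u' : List X},
      keysLe (l.flatMap fun j => [sigmaStar (σ j), sigmaSharp τ (σ j)]) u u' →
      keysLe (l.flatMap fun j => [sigmaStar (σ j), sigmaSharp τ (σ j)]) (w ++ u) (w ++ u')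
  | [], u, u', h => by
      simp only [List.flatMap_nil, keysLe] at h ⊢
      rcases h with h | rfl
      · exact Or.inl (List.Lex.append_left _ h w)
      · exact Or.inr rfl
  | j :: l, u, u', h => by
      simp only [List.flatMap_cons, List.cons_append, List.nil_append, keysLe] at h ⊢
      rcases h with h | ⟨he, h | ⟨he2, h⟩⟩
      · exact Or.inl (by rw [sigmaStar_append, sigmaStar_append]; omega)
      · refine Or.inr ⟨by rw [sigmaStar_append, sigmaStar_append, he], Or.inl ?_⟩
        rw [sigmaSharp_append, sigmaSharp_append, he]
        omega
      · exact Or.inr ⟨by rw [sigmaStar_append, sigmaStar_append, he],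
          Or.inr ⟨by rw [sigmaSharp_append, sigmaSharp_append, he, he2],
            pairKeys_left τ σ w l h⟩⟩

lemma gLe_append_right {X : Type*} [Inhabited X] [LinearOrder X] (τ : X → ℕ)
    (hτ : ∀ a, 0 < τ a) {s : ℕ} (σ : Fin s → X → ℕ) {w w' : List X} (u : List X)
    (h : gLe τ σ w w') : gLe τ σ (w ++ u) (w' ++ u) := by
  rw [gLe, keysLe] at h ⊢
  rcases h with h | ⟨he, h⟩
  · exact Or.inl (by rw [sigmaStar_append, sigmaStar_append]; omega)
  · exact Or.inr ⟨by rw [sigmaStar_append, sigmaStar_append, he],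
      pairKeys_right τ hτ σ u _ he h⟩

lemma gLe_append_left {X : Type*} [Inhabited X] [LinearOrder X] (τ : X → ℕ)
    {s : ℕ} (σ : Fin s → X → ℕ) (w : List X) {u u' : List X}
    (h : gLe τ σ u u') : gLe τ σ (w ++ u) (w ++ u') := by
  rw [gLe, keysLe] at h ⊢
  rcases h with h | ⟨he, h⟩
  · exact Or.inl (by rw [sigmaStar_append, sigmaStar_append]; omega)
  · exact Or.inr ⟨by rw [sigmaStar_append, sigmaStar_append, he],
      pairKeys_left τ σ w _ h⟩

/-- `(X*, ≤_g)` is an ordered monoid: `≤_g` is a total order, the empty word is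
minimal and concatenation is order-preserving in both arguments. -/
theorem stmt_6 {X : Type*} [Inhabited X] [Fintype X] [LinearOrder X]
    (τ : X → ℕ) (hτ : ∀ a, 0 < τ a) {s : ℕ} (σ : Fin s → X → ℕ) :
    (∀ w : List X, gLe τ σ [] w) ∧
    (∀ w w' : List X, gLe τ σ w w' ∨ gLe τ σ w' w) ∧
    (∀ w w' : List X, gLe τ σ w w' → gLe τ σ w' w → w = w') ∧
    (∀ w w' w'' : List X, gLe τ σ w w' → gLe τ σ w' w'' → gLe τ σ w w'') ∧
    (∀ w w' u u' : List X, gLe τ σ w w' → gLe τ σ u u' →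
      gLe τ σ (w ++ u) (w' ++ u')) := by
  refine ⟨?_, ?_, ?_, ?_, ?_⟩
  · intro w
    apply keysLe_nil_left
    intro k hk
    rcases List.mem_cons.mp hk with rfl | hk
    · exact sigmaStar_nil τ
    · rcases List.mem_flatMap.mp hk with ⟨j, -, hj⟩
      simp only [List.mem_cons, List.mem_singleton, List.not_mem_nil, or_false] at hj
      rcases hj with rfl | rfl
      · exact sigmaStar_nil _
      · exact sigmaSharp_nil _ _
  · intro w w'; exact keysLe_total _ w w'
  · intro w w'; exact keysLe_antisymm _ w w'
  · intro w w' w''; exact keysLe_trans _ w w' w''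
  · intro w w' u u' h1 h2
    exact keysLe_trans _ _ _ _ (gLe_append_right τ hτ σ u h1) (gLe_append_left τ σ w' h2)
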